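/- For every real β > −1, every integer k ≥ 1, and every ζ ∈ ℝ: J_k^{−1,β}(ζ) = ((k+β)/(2k+β)) · ( J_k^{0,β}(ζ) − J_{k−1}^{0,β}(ζ) ). -/

import Mathlib

open Real MeasureTheory

/-- Generalized binomial coefficient `C(x,k) = x(x-1)⋯(x-k+1)/k!`. -/
noncomputable def genBinom (x : ℝ) (k : ℕ) : ℝ :=
  (descPochhammer ℝ k).eval x / (Nat.factorial k : ℝ)

/-- Generalized Jacobi polynomial `J_n^{α,β}(ζ)`. -/
noncomputable def genJacobi (α β : ℝ) (n : ℕ) (ζ : ℝ) : ℝ :=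
  ∑ m ∈ Finset.range (n + 1),
    genBinom ((n : ℝ) + α) (n - m) * genBinom ((n : ℝ) + β) m *
      ((ζ - 1) / 2) ^ m * ((ζ + 1) / 2) ^ (n - m)


lemma genBinom_natCast (n r : ℕ) : genBinom (n : ℝ) r = (n.choose r : ℝ) := by
  unfold genBinom
  rw [descPochhammer_eval_eq_descFactorial, Nat.descFactorial_eq_factorial_mul_choose]
  push_cast
  rw [mul_comm, mul_div_assoc, div_self (by positivity), mul_one]

lemma genBinom_cast_succ (n r : ℕ) : genBinom ((n : ℝ) + 1) r = ((n+1).choose r : ℝ) := by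
  rw [show ((n:ℝ) + 1) = (((n+1 : ℕ)) : ℝ) by push_cast; ring, genBinom_natCast]

lemma genBinom_zero (x : ℝ) : genBinom x 0 = 1 := by simp [genBinom]

lemma genBinom_rec1 (x : ℝ) (m : ℕ) :
    (x + 1) * genBinom x m = (x + 1 - m) * genBinom (x + 1) m := by
  have h1 : (descPochhammer ℝ (m+1)).eval (x+1)
      = (x+1) * (descPochhammer ℝ m).eval x := by
    rw [descPochhammer_succ_left]; simp [Polynomial.eval_comp]
  have h2 : (descPochhammer ℝ (m+1)).eval (x+1)
      = (descPochhammer ℝ m).eval (x+1) * (x + 1 - m) := by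
    rw [descPochhammer_succ_right]; simp
  unfold genBinom
  have hf : (Nat.factorial m : ℝ) ≠ 0 := by positivity
  field_simp
  linear_combination h2 - h1

lemma genBinom_rec2 (x : ℝ) (m : ℕ) :
    (x + 1) * genBinom x m = ((m : ℝ) + 1) * genBinom (x + 1) (m + 1) := by
  have h1 : (descPochhammer ℝ (m+1)).eval (x+1)
      = (x+1) * (descPochhammer ℝ m).eval x := by
    rw [descPochhammer_succ_left]; simp [Polynomial.eval_comp]
  unfold genBinom
  have hf : (Nat.factorial m : ℝ) ≠ 0 := by positivity
  have hf2 : (Nat.factorial (m+1) : ℝ) ≠ 0 := by positivity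
  rw [Nat.factorial_succ]
  push_cast
  field_simp
  linear_combination (-1 : ℝ) * h1

/-- `J_k^{-1,β} = ((k+β)/(2k+β)) (J_k^{0,β} - J_{k-1}^{0,β})` for `k ≥ 1`. -/
theorem genJacobi_m1_two_term (β : ℝ) (hβ : -1 < β) (k : ℕ) (hk : 1 ≤ k) (ζ : ℝ) :
    genJacobi (-1) β k ζ
      = ((k : ℝ) + β) / (2 * (k : ℝ) + β) *
          (genJacobi 0 β k ζ - genJacobi 0 β (k - 1) ζ) := by
  obtain ⟨j, rfl⟩ : ∃ j, k = j + 1 := ⟨k - 1, (Nat.succ_pred_eq_of_pos hk).symm⟩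
  set x := (ζ - 1) / 2 with hxdef
  set y := (ζ + 1) / 2 with hydef
  have hy : y = x + 1 := by rw [hxdef, hydef]; ring
  have hjj : (0:ℝ) ≤ (j:ℝ) := Nat.cast_nonneg j
  have hb1 : ((j:ℝ) + 1 + β) ≠ 0 := by nlinarith
  have hb2 : (2 * ((j:ℝ) + 1) + β) ≠ 0 := by nlinarith
  -- expand J_{j}^{0,β} as difference of two sums over range (j+2)
  have hP : genJacobi 0 β j ζ
      = (∑ m ∈ Finset.range (j+2),
          (if m ≤ j then genBinom (j:ℝ) (j-m) * genBinom ((j:ℝ)+β) m * x^m * y^(j+1-m) else 0))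
        - (∑ m ∈ Finset.range (j+2),
          (if 1 ≤ m then genBinom (j:ℝ) (j+1-m) * genBinom ((j:ℝ)+β) (m-1) * x^m * y^(j+1-m) else 0)) := by
    have hA : (∑ m ∈ Finset.range (j+2),
        (if m ≤ j then genBinom (j:ℝ) (j-m) * genBinom ((j:ℝ)+β) m * x^m * y^(j+1-m) else 0))
        = ∑ m ∈ Finset.range (j+1),
            genBinom (j:ℝ) (j-m) * genBinom ((j:ℝ)+β) m * x^m * y^((j-m)+1) := by
      rw [Finset.sum_range_succ, if_neg (by omega : ¬ (j+1 ≤ j)), add_zero]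
      refine Finset.sum_congr rfl fun m hm => ?_
      have hmj : m ≤ j := by simpa [Nat.lt_succ_iff] using hm
      rw [if_pos hmj, show j + 1 - m = (j - m) + 1 from by omega]
    have hB : (∑ m ∈ Finset.range (j+2),
        (if 1 ≤ m then genBinom (j:ℝ) (j+1-m) * genBinom ((j:ℝ)+β) (m-1) * x^m * y^(j+1-m) else 0))
        = ∑ m ∈ Finset.range (j+1),
            genBinom (j:ℝ) (j-m) * genBinom ((j:ℝ)+β) m * x^(m+1) * y^(j-m) := by
      rw [Finset.sum_range_succ', if_neg (by omega : ¬ (1 ≤ 0)), add_zero]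
      refine Finset.sum_congr rfl fun m hm => ?_
      rw [if_pos (by omega : 1 ≤ m + 1), show j + 1 - (m+1) = j - m from by omega,
        show m + 1 - 1 = m from by omega]
    rw [hA, hB, ← Finset.sum_sub_distrib]
    unfold genJacobi
    refine Finset.sum_congr rfl fun m hm => ?_
    rw [add_zero, hy]
    ring
  simp only [Nat.add_sub_cancel]
  rw [hP]
  unfold genJacobi
  push_cast
  simp only [show ((j:ℝ) + 1) + -1 = (j:ℝ) from by ring, add_zero]
  rw [show ∀ a p q : ℝ, a - (p - q) = a - p + q from fun a p q => by ring]
  rw [← Finset.sum_sub_distrib, ← Finset.sum_add_distrib, Finset.mul_sum]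
  refine Finset.sum_congr rfl fun m hm => ?_
  rw [div_mul_eq_mul_div, eq_div_iff hb2]
  rcases m with _ | s
  · simp only [if_pos (Nat.zero_le j), if_neg (by omega : ¬ (1 ≤ 0)), Nat.sub_zero, pow_zero,
      genBinom_zero, genBinom_natCast, genBinom_cast_succ, Nat.choose_self,
      Nat.choose_succ_self, Nat.cast_one, Nat.cast_zero]
    ring
  · have hs : s ≤ j := by
      have := Finset.mem_range.mp hm; omega
    simp only [show j + 1 - (s+1) = j - s from by omega, Nat.add_sub_cancel,
      if_pos (by omega : 1 ≤ s + 1)]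
    have R1 : ((j:ℝ) + 1 + β) * genBinom ((j:ℝ) + β) (s+1)
        = ((j:ℝ) + β - s) * genBinom ((j:ℝ) + 1 + β) (s+1) := by
      have h := genBinom_rec1 ((j:ℝ) + β) (s+1)
      rw [show (j:ℝ) + β + 1 = (j:ℝ) + 1 + β from by ring] at h
      push_cast at h
      linarith [h]
    have R2 : ((j:ℝ) + 1 + β) * genBinom ((j:ℝ) + β) s
        = ((s:ℝ) + 1) * genBinom ((j:ℝ) + 1 + β) (s+1) := by
      have h := genBinom_rec2 ((j:ℝ) + β) s
      rw [show (j:ℝ) + β + 1 = (j:ℝ) + 1 + β from by ring] at h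
      exact h
    rcases eq_or_lt_of_le hs with rfl | hsj
    · rw [if_neg (by omega : ¬ (s + 1 ≤ s))]
      simp only [Nat.sub_self, genBinom_zero, pow_zero]
      linear_combination (-(x^(s+1))) * R2
    · obtain ⟨t, ht⟩ : ∃ t, j - s = t + 1 := ⟨j - s - 1, by omega⟩
      rw [if_pos (by omega : s + 1 ≤ j)]
      rw [show j - (s+1) = t from by omega]
      rw [genBinom_natCast, genBinom_natCast, genBinom_cast_succ]
      have hpas : (((j+1).choose (j-s) : ℕ) : ℝ) = (j.choose t : ℝ) + (j.choose (j-s) : ℝ) := by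
        rw [ht, Nat.choose_succ_succ]
        push_cast; ring
      have hcr : ((j.choose (j-s) : ℕ) : ℝ) * ((t:ℝ) + 1) = (j.choose t : ℝ) * ((s:ℝ) + 1) := by
        have h := Nat.choose_succ_right_eq j t
        rw [show j - t = s + 1 from by omega] at h
        rw [ht]
        exact_mod_cast h
      have hts : (t : ℝ) = (j:ℝ) - (s:ℝ) - 1 := by
        have : j = s + t + 1 := by omega
        rw [this]; push_cast; ring
      linear_combination ((j.choose t : ℝ) * (x^(s+1) * y^(j-s))) * R1
        + (-((j.choose (j-s) : ℝ) * (x^(s+1) * y^(j-s)))) * R2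
        + (-(((j:ℝ)+1+β) * genBinom ((j:ℝ)+1+β) (s+1) * (x^(s+1) * y^(j-s)))) * hpas
        + (genBinom ((j:ℝ)+1+β) (s+1) * (x^(s+1) * y^(j-s))) * hcr
        + (-((j.choose (j-s) : ℝ) * genBinom ((j:ℝ)+1+β) (s+1) * (x^(s+1) * y^(j-s)))) * hts
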